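/- Let G be a group with a finite generating set A and let Γ = C(G;A) be its right Cayley graph. If there exist constants C > 0 and ε > 0 and a flow f on Γ such that |f(e)| ≤ C for every directed edge e and the inflow into every vertex is at least ε, then the Cheeger isoperimetric constant satisfies ι*(G;A) ≥ ε/C; in particular every finite nonempty subset Y ⊆ G satisfies ε·|Y| ≤ C·|∂*Y|. -/

import Mathlib

/-- The group element corresponding to a letter `(i, b)`: the generator `A i` itself if
`b = true`, and its inverse if `b = false`. -/
def genOf {G : Type*} [Group G] {ι : Type*} (A : ι → G) : ι × Bool → G :=
  fun s => if s.2 then A s.1 else (A s.1)⁻¹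

/-- The Cheeger boundary of a finite set `Y` in the right Cayley graph of `G` with respect to
the generating family `A`: the set of directed edges `(g, s)` (an edge labelled by the letter
`s` going from `g` to `g * genOf A s`) with initial vertex in `Y` and terminal vertex
outside `Y`. -/
def cheegerBoundary {G : Type*} [Group G] {ι : Type*} (A : ι → G) (Y : Finset G) :
    Set (G × ι × Bool) :=
  {e | e.1 ∈ Y ∧ e.1 * genOf A e.2 ∉ Y}

/-- The Cheeger isoperimetric constant `ι*(G; A)`: the infimum over all finite nonempty
subsets `Y ⊆ G` of `|∂*Y| / |Y|`. -/
noncomputable def cheegerConst {G : Type*} [Group G] {ι : Type*} (A : ι → G) : ℝ :=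
  ⨅ Y : {Y : Finset G // Y.Nonempty},
    (Nat.card (cheegerBoundary A Y.1) : ℝ) / ((Y.1.card : ℝ))

/-- The inverse of the directed edge `(g, (i, b))` from `g` to `g * genOf A (i, b)`:
it is the edge labelled by the inverse letter `(i, !b)` starting at the terminal vertex. -/
def edgeInv {G : Type*} [Group G] {ι : Type*} (A : ι → G) (e : G × ι × Bool) :
    G × ι × Bool :=
  (e.1 * genOf A e.2, (e.2.1, !e.2.2))

/-- A flow on the right Cayley graph of `G` with respect to `A`: a real-valued function on
directed edges with `f(e⁻¹) = -f(e)`. -/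
def IsFlow {G : Type*} [Group G] {ι : Type*} (A : ι → G) (f : G × ι × Bool → ℝ) : Prop :=
  ∀ e : G × ι × Bool, f (edgeInv A e) = - f e

/-- The inflow into a vertex `v`: the sum of the flow over all directed edges with terminal
vertex `v`; these are exactly the edges `(v * (genOf A s)⁻¹, s)` for letters `s`. -/
noncomputable def inflow {G : Type*} [Group G] {ι : Type*} [Fintype ι] (A : ι → G)
    (f : G × ι × Bool → ℝ) (v : G) : ℝ :=
  ∑ s : ι × Bool, f (v * (genOf A s)⁻¹, s)

/-- Let `G` be a group with finite generating set `A` and let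
`Γ = C(G; A)` be its right Cayley graph. If there exist constants `C > 0` and `ε > 0` and a
flow `f` on `Γ` such that `|f(e)| ≤ C` for every directed edge `e` and the inflow into every
vertex is at least `ε`, then the Cheeger isoperimetric constant satisfies
`ι*(G; A) ≥ ε / C`; in particular every finite nonempty subset `Y ⊆ G` satisfies
`ε·|Y| ≤ C·|∂*Y|`. -/
theorem cheegerConst_ge_of_flow {G : Type*} [Group G]
    {ι : Type*} [Fintype ι] (A : ι → G)
    (hA : Subgroup.closure (Set.range A) = ⊤)
    (C ε : ℝ) (hC : 0 < C) (hε : 0 < ε)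
    (f : G × ι × Bool → ℝ) (hf : IsFlow A f)
    (hbound : ∀ e : G × ι × Bool, |f e| ≤ C)
    (hin : ∀ v : G, ε ≤ inflow A f v) :
    ε / C ≤ cheegerConst A ∧
      ∀ Y : Finset G, Y.Nonempty →
        ε * (Y.card : ℝ) ≤ C * (Nat.card (cheegerBoundary A Y) : ℝ) := by
  classical
  have hnot : ∀ s : ι × Bool, genOf A (s.1, !s.2) = (genOf A s)⁻¹ := by
    rintro ⟨i, b⟩; cases b <;> simp [genOf]
  have hfe : ∀ (v : G) (s : ι × Bool),
      f (v, (s.1, !s.2)) = - f (v * (genOf A s)⁻¹, s) := by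
    intro v s
    have := hf (v * (genOf A s)⁻¹, s)
    simpa [edgeInv] using this
  have key : ∀ Y : Finset G, Y.Nonempty →
      ε * (Y.card : ℝ) ≤ C * (Nat.card (cheegerBoundary A Y) : ℝ) := by
    intro Y hY
    set B : Finset (G × ι × Bool) :=
      (Y ×ˢ (Finset.univ : Finset (ι × Bool))).filter
        (fun e => e.1 * genOf A e.2 ∉ Y) with hB
    have hcard : (Nat.card (cheegerBoundary A Y) : ℝ) = (B.card : ℝ) := by
      have hset : cheegerBoundary A Y = ↑B := by
        ext e
        simp only [cheegerBoundary, Set.mem_setOf_eq, hB, Finset.coe_filter,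
          Finset.mem_product, Finset.mem_univ, and_true, Set.mem_setOf_eq]
      rw [hset, Nat.card_coe_set_eq, Set.ncard_coe_finset]
    set F : G × ι × Bool → ℝ := fun p => f (p.1 * (genOf A p.2)⁻¹, p.2) with hF
    set P : Finset (G × ι × Bool) := Y ×ˢ (Finset.univ : Finset (ι × Bool)) with hP
    have h1 : ε * (Y.card : ℝ) ≤ ∑ v ∈ Y, inflow A f v := by
      calc ε * (Y.card : ℝ) = ∑ _v ∈ Y, ε := by
            rw [Finset.sum_const, nsmul_eq_mul, mul_comm]
        _ ≤ ∑ v ∈ Y, inflow A f v := Finset.sum_le_sum fun v _ => hin v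
    have h2 : ∑ v ∈ Y, inflow A f v = ∑ p ∈ P, F p := by
      rw [hP, Finset.sum_product]; rfl
    set Pin := P.filter (fun p => p.1 * (genOf A p.2)⁻¹ ∈ Y) with hPin
    set Pout := P.filter (fun p => p.1 * (genOf A p.2)⁻¹ ∉ Y) with hPout
    have hsplit : ∑ p ∈ P, F p = ∑ p ∈ Pin, F p + ∑ p ∈ Pout, F p :=
      (Finset.sum_filter_add_sum_filter_not P _ F).symm
    have hzero : ∑ p ∈ Pin, F p = 0 := by
      apply Finset.sum_involution
        (g := fun p _ => (p.1 * (genOf A p.2)⁻¹, (p.2.1, !p.2.2)))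
      · intro p hp
        show F p + f (p.1 * (genOf A p.2)⁻¹ * (genOf A (p.2.1, !p.2.2))⁻¹,
          (p.2.1, !p.2.2)) = 0
        rw [hnot, inv_inv, inv_mul_cancel_right, hfe]
        ring
      · intro p hp _
        intro hcontra
        have := congrArg (fun q => q.2.2) hcontra
        simp at this
      · intro p hp
        rw [hPin, Finset.mem_filter] at hp ⊢
        obtain ⟨hpP, hpin⟩ := hp
        rw [hP, Finset.mem_product] at hpP
        constructor
        · rw [hP, Finset.mem_product]; exact ⟨hpin, Finset.mem_univ _⟩
        · show p.1 * (genOf A p.2)⁻¹ * (genOf A (p.2.1, !p.2.2))⁻¹ ∈ Y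
          rw [hnot, inv_inv, inv_mul_cancel_right]; exact hpP.1
      · intro p hp
        show (p.1 * (genOf A p.2)⁻¹ * (genOf A (p.2.1, !p.2.2))⁻¹,
          ((p.2.1, !p.2.2).1, !(p.2.1, !p.2.2).2)) = p
        rw [hnot, inv_inv, inv_mul_cancel_right]
        simp
    have hPoutB : Pout.card ≤ B.card := by
      apply Finset.card_le_card_of_injOn (fun p => (p.1, (p.2.1, !p.2.2)))
      · intro p hp
        rw [hPout, Finset.mem_coe, Finset.mem_filter] at hp
        obtain ⟨hpP, hpout⟩ := hp
        rw [hP, Finset.mem_product] at hpP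
        rw [Finset.mem_coe, hB, Finset.mem_filter, Finset.mem_product]
        refine ⟨⟨hpP.1, Finset.mem_univ _⟩, ?_⟩
        show p.1 * genOf A ((p.2.1, !p.2.2)) ∉ Y
        rw [hnot]; exact hpout
      · intro p _ q _ hpq
        have h1 := congrArg Prod.fst hpq
        have h2 := congrArg (fun r => r.2.1) hpq
        have h3 := congrArg (fun r => r.2.2) hpq
        simp only at h1 h2 h3
        have : p.2.2 = q.2.2 := by
          cases hb : p.2.2 <;> cases hb' : q.2.2 <;> simp [hb, hb'] at h3 ⊢
        exact Prod.ext h1 (Prod.ext h2 this)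
    have h4 : ∑ p ∈ Pout, F p ≤ C * (B.card : ℝ) := by
      calc ∑ p ∈ Pout, F p ≤ ∑ _p ∈ Pout, C :=
            Finset.sum_le_sum fun p _ => le_trans (le_abs_self _) (hbound _)
        _ = C * (Pout.card : ℝ) := by rw [Finset.sum_const, nsmul_eq_mul, mul_comm]
        _ ≤ C * (B.card : ℝ) := by
            apply mul_le_mul_of_nonneg_left _ hC.le
            exact_mod_cast hPoutB
    rw [hcard]
    calc ε * (Y.card : ℝ) ≤ ∑ p ∈ P, F p := h2 ▸ h1
      _ = ∑ p ∈ Pout, F p := by rw [hsplit, hzero, zero_add]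
      _ ≤ C * (B.card : ℝ) := h4
  refine ⟨?_, key⟩
  have hne : Nonempty {Y : Finset G // Y.Nonempty} :=
    ⟨⟨{1}, Finset.singleton_nonempty 1⟩⟩
  apply le_ciInf
  intro Y
  have hy : (0 : ℝ) < (Y.1.card : ℝ) := by exact_mod_cast Y.2.card_pos
  rw [div_le_div_iff₀ hC hy]
  calc ε * (Y.1.card : ℝ) ≤ C * (Nat.card (cheegerBoundary A Y.1) : ℝ) := key Y.1 Y.2
    _ = (Nat.card (cheegerBoundary A Y.1) : ℝ) * C := mul_comm _ _
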